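/- For 0 < α < 1 and 0 < θ ≤ π, the series ∑_{k=0}^{∞} (−1)^k C(α,k) cos(kθ) converges absolutely to 2^α · sin^α(θ/2) · cos(α(θ − π)/2). -/

import Mathlib

open Real

/-- Generalized binomial coefficient `C(α, k) = α(α−1)⋯(α−k+1)/k!` for real `α`. -/
noncomputable def genBinom (α : ℝ) (k : ℕ) : ℝ :=
  (∏ i ∈ Finset.range k, (α - i)) / (Nat.factorial k)

section Aux

open Complex Set Filter

lemma genBinom_zero (α : ℝ) : genBinom α 0 = 1 := by simp [genBinom]

lemma genBinom_succ (α : ℝ) (k : ℕ) :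
    genBinom α (k + 1) = genBinom α k * (α - k) / (k + 1) := by
  have hfac : (((k+1).factorial : ℕ) : ℝ) = ((k:ℝ) + 1) * (k.factorial : ℝ) := by
    rw [Nat.factorial_succ]; push_cast; ring
  rw [genBinom, genBinom, Finset.prod_range_succ, hfac, div_mul_eq_mul_div, div_div,
    mul_comm (Nat.factorial k : ℝ)]

noncomputable def gbC (α : ℝ) (k : ℕ) : ℝ :=
  ∏ i ∈ Finset.range k, ((i + 1 - α) / (i + 1))

lemma gbC_pos {α : ℝ} (h1 : α < 1) (k : ℕ) : 0 < gbC α k := by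
  apply Finset.prod_pos
  intro i _
  have h : α < (i : ℝ) + 1 := lt_of_lt_of_le h1 (by
    have : (0:ℝ) ≤ (i:ℝ) := Nat.cast_nonneg i
    linarith)
  have hp : (0:ℝ) < (i:ℝ) + 1 := by positivity
  exact div_pos (by linarith) hp

lemma gbC_le_one {α : ℝ} (h0 : 0 < α) (h1 : α < 1) (k : ℕ) : gbC α k ≤ 1 := by
  apply Finset.prod_le_one
  · intro i _
    have h : α < (i : ℝ) + 1 := lt_of_lt_of_le h1 (by
      have : (0:ℝ) ≤ (i:ℝ) := Nat.cast_nonneg i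
      linarith)
    have hp : (0:ℝ) < (i:ℝ) + 1 := by positivity
    exact le_of_lt (div_pos (by linarith) hp)
  · intro i _
    have hp : (0:ℝ) < (i:ℝ) + 1 := by positivity
    rw [div_le_one hp]
    linarith

lemma genBinom_succ_eq {α : ℝ} (k : ℕ) :
    genBinom α (k + 1) = (-1) ^ k * (α / (k + 1)) * gbC α k := by
  induction k with
  | zero => simp [genBinom_succ, genBinom_zero, gbC]
  | succ n ih =>
    rw [genBinom_succ, ih]
    simp only [gbC, Finset.prod_range_succ]
    have h1 : ((n:ℝ)+1) ≠ 0 := by positivity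
    have h2 : ((n:ℝ)+1+1) ≠ 0 := by positivity
    push_cast
    field_simp
    ring

lemma abs_genBinom_succ {α : ℝ} (h0 : 0 < α) (h1 : α < 1) (k : ℕ) :
    |genBinom α (k + 1)| = (α / (k + 1)) * gbC α k := by
  rw [genBinom_succ_eq, abs_mul, abs_mul, _root_.abs_pow, abs_neg, abs_one, one_pow, one_mul,
    abs_of_pos (by positivity), abs_of_pos (gbC_pos h1 k)]

lemma abs_genBinom_telescope {α : ℝ} (h0 : 0 < α) (h1 : α < 1) (k : ℕ) :
    |genBinom α (k + 1)| = gbC α k - gbC α (k + 1) := by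
  rw [abs_genBinom_succ h0 h1]
  simp only [gbC, Finset.prod_range_succ]
  have h2 : ((k:ℝ)+1) ≠ 0 := by positivity
  push_cast
  field_simp
  ring

lemma abs_genBinom_le_one {α : ℝ} (h0 : 0 < α) (h1 : α < 1) (k : ℕ) :
    |genBinom α k| ≤ 1 := by
  cases k with
  | zero => simp [genBinom_zero]
  | succ n =>
    rw [abs_genBinom_succ h0 h1]
    have hle := gbC_le_one h0 h1 n
    have hpos := gbC_pos h1 n
    have hd : α / (n + 1) ≤ 1 := by
      rw [div_le_one (by positivity)]
      have : (0:ℝ) ≤ (n:ℝ) := Nat.cast_nonneg n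
      linarith
    calc α / (↑n + 1) * gbC α n ≤ 1 * 1 :=
          mul_le_mul hd hle (le_of_lt hpos) zero_le_one
      _ = 1 := by ring

lemma summable_abs_genBinom {α : ℝ} (h0 : 0 < α) (h1 : α < 1) :
    Summable (fun k : ℕ => |genBinom α k|) := by
  apply summable_of_sum_range_le (c := 2) (fun k => abs_nonneg _)
  intro n
  cases n with
  | zero => simp
  | succ m =>
    rw [Finset.sum_range_succ']
    simp only [genBinom_zero, abs_one]
    have htel : ∑ i ∈ Finset.range m, |genBinom α (i + 1)| = gbC α 0 - gbC α m := by
      rw [← Finset.sum_range_sub' (fun k => gbC α k)]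
      exact Finset.sum_congr rfl fun i _ => abs_genBinom_telescope h0 h1 i
    rw [htel]
    have h0' : gbC α 0 = 1 := by simp [gbC]
    have := gbC_pos h1 m
    rw [h0']
    linarith

set_option maxHeartbeats 1000000 in
lemma binom_tsum_eq (α : ℝ) (h0 : 0 < α) (h1 : α < 1) (z : ℂ) (hz : ‖z‖ ≤ 1)
    (hre : -1 < z.re) :
    ∑' k : ℕ, (genBinom α k : ℂ) * z ^ k = (1 + z) ^ (α : ℂ) := by
  -- the function
  set F : ℝ → ℂ := fun r => ∑' k : ℕ, (genBinom α k : ℂ) * z ^ k * (r : ℂ) ^ k with hF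
  have hu : Summable fun k : ℕ => |genBinom α k| := summable_abs_genBinom h0 h1
  -- norm of a term
  have hnorm : ∀ (k : ℕ) (r : ℝ), ‖(genBinom α k : ℂ) * z ^ k * (r : ℂ) ^ k‖
      = |genBinom α k| * (‖z‖) ^ k * |r| ^ k := by
    intro k r
    simp [norm_mul, norm_pow, Complex.norm_real]
  have hbound : ∀ (k : ℕ) (r : ℝ), |r| ≤ 1 → ‖(genBinom α k : ℂ) * z ^ k * (r : ℂ) ^ k‖
      ≤ |genBinom α k| := by
    intro k r hr
    rw [hnorm]
    have h1' : ‖z‖ ^ k ≤ 1 := pow_le_one₀ (norm_nonneg z) hz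
    have h2' : |r| ^ k ≤ 1 := pow_le_one₀ (abs_nonneg r) hr
    calc |genBinom α k| * ‖z‖ ^ k * |r| ^ k
        ≤ |genBinom α k| * 1 * 1 := by
          apply mul_le_mul (mul_le_mul le_rfl h1' (by positivity) (abs_nonneg _)) h2'
            (by positivity) (by positivity)
      _ = |genBinom α k| := by ring
  -- summability at each |r| ≤ 1
  have hsummable : ∀ r : ℝ, |r| ≤ 1 → Summable fun k : ℕ =>
      (genBinom α k : ℂ) * z ^ k * (r : ℂ) ^ k := by
    intro r hr
    exact Summable.of_norm_bounded hu fun k => hbound k r hr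
  -- continuity of F on [-1,1]
  have hFcont : ContinuousOn F (Icc (-1 : ℝ) 1) := by
    apply continuousOn_tsum (u := fun k => |genBinom α k|) _ hu
    · intro n x hx
      exact hbound n x (abs_le.mpr ⟨hx.1, hx.2⟩)
    · intro k
      apply Continuous.continuousOn
      continuity
  -- derivative terms
  set g' : ℕ → ℝ → ℂ := fun k r => (genBinom α k : ℂ) * z ^ k * ((k : ℂ) * (r : ℂ) ^ (k - 1))
    with hg'
  have hterm_deriv : ∀ (k : ℕ) (r : ℝ),
      HasDerivAt (fun r : ℝ => (genBinom α k : ℂ) * z ^ k * (r : ℂ) ^ k) (g' k r) r := by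
    intro k r
    have h1 : HasDerivAt (fun w : ℂ => w ^ k) ((k : ℂ) * (r : ℂ) ^ (k - 1)) (r : ℂ) :=
      hasDerivAt_pow k (r : ℂ)
    have h2 : HasDerivAt (fun r : ℝ => (r : ℂ) ^ k) ((k : ℂ) * (r : ℂ) ^ (k - 1)) r :=
      h1.comp_ofReal
    exact h2.const_mul _
  -- summable bound for derivatives on a ball of radius ρ < 1
  have hderiv_bound : ∀ (k : ℕ) (r : ℝ) (ρ : ℝ), 0 ≤ ρ → |r| ≤ ρ →
      ‖g' k r‖ ≤ (k : ℝ) * ρ ^ (k - 1) := by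
    intro k r ρ hρ hr
    have : ‖g' k r‖ = |genBinom α k| * ‖z‖ ^ k * ((k : ℝ) * |r| ^ (k - 1)) := by
      simp [hg', norm_mul, norm_pow, Complex.norm_real,
        Complex.norm_natCast, abs_of_nonneg]
    rw [this]
    have hb1 : |genBinom α k| * ‖z‖ ^ k ≤ 1 := by
      calc |genBinom α k| * ‖z‖ ^ k ≤ 1 * 1 := by
            apply mul_le_mul (abs_genBinom_le_one h0 h1 k)
              (pow_le_one₀ (norm_nonneg z) hz) (by positivity) zero_le_one
        _ = 1 := by ring
    have hb2 : (k : ℝ) * |r| ^ (k - 1) ≤ (k : ℝ) * ρ ^ (k - 1) := by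
      apply mul_le_mul_of_nonneg_left (pow_le_pow_left₀ (abs_nonneg r) hr _) (Nat.cast_nonneg k)
    calc |genBinom α k| * ‖z‖ ^ k * ((k : ℝ) * |r| ^ (k - 1))
        ≤ 1 * ((k : ℝ) * |r| ^ (k - 1)) := by
          apply mul_le_mul_of_nonneg_right hb1 (by positivity)
      _ = (k : ℝ) * |r| ^ (k - 1) := one_mul _
      _ ≤ (k : ℝ) * ρ ^ (k - 1) := hb2
  have hsum_kr : ∀ ρ : ℝ, 0 ≤ ρ → ρ < 1 → Summable (fun k : ℕ => (k : ℝ) * ρ ^ (k - 1)) := by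
    intro ρ hρ0 hρ1
    rw [← summable_nat_add_iff 1]
    simp only [Nat.add_sub_cancel, Nat.cast_add, Nat.cast_one]
    have h1 : Summable (fun k : ℕ => (k : ℝ) * ρ ^ k) := by
      simpa using summable_pow_mul_geometric_of_norm_lt_one 1
        (by rw [Real.norm_eq_abs, _root_.abs_of_nonneg hρ0]; exact hρ1)
    have h2 : Summable (fun k : ℕ => ρ ^ k) := summable_geometric_of_lt_one hρ0 hρ1
    simpa [add_mul] using h1.add h2
  -- F has the expected derivative on Ioo (-1) 1
  have hFderiv : ∀ r ∈ Ioo (-1 : ℝ) 1, HasDerivAt F (∑' k : ℕ, g' k r) r := by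
    intro r hr
    set ρ : ℝ := (1 + |r|) / 2 with hρ
    have hrabs : |r| < 1 := abs_lt.mpr ⟨hr.1, hr.2⟩
    have hρ0 : 0 ≤ ρ := by positivity
    have hρ1 : ρ < 1 := by rw [hρ]; linarith
    have hrρ : |r| < ρ := by rw [hρ]; linarith
    apply hasDerivAt_tsum_of_isPreconnected (hsum_kr ρ hρ0 hρ1)
      (isOpen_Ioo (a := -ρ) (b := ρ)) (convex_Ioo _ _).isPreconnected
      (fun k y _ => hterm_deriv k y)
      (fun k y hy => hderiv_bound k y ρ hρ0 (abs_le.mpr ⟨le_of_lt hy.1, le_of_lt hy.2⟩))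
      (show (0:ℝ) ∈ Ioo (-ρ) ρ by constructor <;> nlinarith [abs_nonneg r])
      (hsummable 0 (by simp))
      (show r ∈ Ioo (-ρ) ρ from abs_lt.mp hrρ |> fun h => ⟨h.1, h.2⟩)
  -- the ODE: (1 + r z) * D r = α z * F r on Ioo (-1) 1
  have hODE : ∀ r ∈ Ioo (-1 : ℝ) 1, (1 + (r : ℂ) * z) * (∑' k : ℕ, g' k r)
      = (α : ℂ) * z * F r := by
    intro r hr
    have hrabs : |r| < 1 := abs_lt.mpr ⟨hr.1, hr.2⟩
    -- summability of the derivative terms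
    have hDsum : Summable fun k : ℕ => g' k r :=
      Summable.of_norm_bounded (hsum_kr |r| (abs_nonneg r) hrabs)
        (fun k => hderiv_bound k r |r| (abs_nonneg r) le_rfl)
    -- master summable for (k+1) |r|^k
    have hM : Summable (fun k : ℕ => ((k : ℝ) + 1) * |r| ^ k) := by
      have := hsum_kr |r| (abs_nonneg r) hrabs
      rw [← summable_nat_add_iff 1] at this
      simpa using this
    -- A : shifted derivative terms
    have hA : Summable fun k : ℕ => ((k : ℂ) + 1) * (genBinom α (k+1) : ℂ) * z ^ (k+1)
        * (r : ℂ) ^ k := by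
      apply Summable.of_norm_bounded hM
      intro k
      have hb : |genBinom α (k+1)| * ‖z‖ ^ (k+1) ≤ 1 := by
        calc |genBinom α (k+1)| * ‖z‖ ^ (k+1) ≤ 1 * 1 := by
              apply mul_le_mul (abs_genBinom_le_one h0 h1 _)
                (pow_le_one₀ (norm_nonneg z) hz) (by positivity) zero_le_one
          _ = 1 := by ring
      have hk1 : ‖((k : ℂ) + 1)‖ = (k : ℝ) + 1 := by
        have : ((k : ℂ) + 1) = (((k + 1 : ℕ) : ℝ) : ℂ) := by push_cast; ring
        rw [this, Complex.norm_real, Real.norm_eq_abs, _root_.abs_of_nonneg (by positivity)]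
        push_cast; ring
      have hthis : ‖((k : ℂ) + 1) * (genBinom α (k+1) : ℂ) * z ^ (k+1) * (r : ℂ) ^ k‖
          = ((k : ℝ) + 1) * (|genBinom α (k+1)| * ‖z‖ ^ (k+1)) * |r| ^ k := by
        rw [norm_mul, norm_mul, norm_mul, norm_pow, norm_pow, hk1]
        simp only [Complex.norm_real,
          Real.norm_eq_abs]
        ring
      rw [hthis]
      calc ((k : ℝ) + 1) * (|genBinom α (k+1)| * ‖z‖ ^ (k+1)) * |r| ^ k
          ≤ ((k : ℝ) + 1) * 1 * |r| ^ k := by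
            apply mul_le_mul_of_nonneg_right (mul_le_mul_of_nonneg_left hb (by positivity))
              (by positivity)
        _ = ((k : ℝ) + 1) * |r| ^ k := by ring
    -- B : k * C_k z^{k+1} r^k
    have hB : Summable fun k : ℕ => (k : ℂ) * (genBinom α k : ℂ) * z ^ (k+1) * (r : ℂ) ^ k := by
      apply Summable.of_norm_bounded hM
      intro k
      have hb : |genBinom α k| * ‖z‖ ^ (k+1) ≤ 1 := by
        calc |genBinom α k| * ‖z‖ ^ (k+1) ≤ 1 * 1 := by
              apply mul_le_mul (abs_genBinom_le_one h0 h1 _)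
                (pow_le_one₀ (norm_nonneg z) hz) (by positivity) zero_le_one
          _ = 1 := by ring
      have hk1 : ‖((k : ℂ))‖ = (k : ℝ) := by
        rw [Complex.norm_natCast]
      have heq : ‖(k : ℂ) * (genBinom α k : ℂ) * z ^ (k+1) * (r : ℂ) ^ k‖
          = (k : ℝ) * (|genBinom α k| * ‖z‖ ^ (k+1)) * |r| ^ k := by
        rw [norm_mul, norm_mul, norm_mul, norm_pow, norm_pow, hk1]
        simp only [Complex.norm_real,
          Real.norm_eq_abs]
        ring
      rw [heq]
      calc (k : ℝ) * (|genBinom α k| * ‖z‖ ^ (k+1)) * |r| ^ k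
          ≤ (k : ℝ) * 1 * |r| ^ k := by
            apply mul_le_mul_of_nonneg_right (mul_le_mul_of_nonneg_left hb (by positivity))
              (by positivity)
        _ ≤ ((k : ℝ) + 1) * |r| ^ k := by
            apply mul_le_mul_of_nonneg_right (by linarith) (by positivity)
    -- D r rewritten as a shifted sum
    have hD_eq : (∑' k : ℕ, g' k r)
        = ∑' k : ℕ, ((k : ℂ) + 1) * (genBinom α (k+1) : ℂ) * z ^ (k+1) * (r : ℂ) ^ k := by
      rw [hDsum.tsum_eq_zero_add]
      have h00 : g' 0 r = 0 := by simp [hg']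
      rw [h00, zero_add]
      apply tsum_congr
      intro k
      simp only [hg', Nat.add_sub_cancel]
      push_cast
      ring
    -- r z * D r rewritten
    have hrzD : (r : ℂ) * z * (∑' k : ℕ, g' k r)
        = ∑' k : ℕ, (k : ℂ) * (genBinom α k : ℂ) * z ^ (k+1) * (r : ℂ) ^ k := by
      rw [← tsum_mul_left]
      apply tsum_congr
      intro k
      cases k with
      | zero => simp [hg']
      | succ n =>
        simp only [hg', Nat.add_sub_cancel]
        push_cast
        ring
    have key : (1 + (r : ℂ) * z) * (∑' k : ℕ, g' k r)
        = (∑' k : ℕ, ((k : ℂ) + 1) * (genBinom α (k+1) : ℂ) * z ^ (k+1) * (r : ℂ) ^ k)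
          + ∑' k : ℕ, (k : ℂ) * (genBinom α k : ℂ) * z ^ (k+1) * (r : ℂ) ^ k := by
      rw [add_mul, one_mul, hD_eq, ← hrzD, hD_eq]
    rw [key, ← hA.tsum_add hB]
    have : (α : ℂ) * z * F r = ∑' k : ℕ, (α : ℂ) * z * ((genBinom α k : ℂ) * z ^ k
        * (r : ℂ) ^ k) := by
      rw [hF, ← tsum_mul_left]
    rw [this]
    apply tsum_congr
    intro k
    -- recurrence: (k+1) C_{k+1} = (α - k) C_k
    have hrec : ((k : ℂ) + 1) * (genBinom α (k+1) : ℂ) = ((α : ℂ) - k) * (genBinom α k : ℂ) := by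
      have h := genBinom_succ α k
      have hk : ((k : ℝ) + 1) ≠ 0 := by positivity
      rw [eq_div_iff hk] at h
      have hcast := congrArg (fun x : ℝ => (x : ℂ)) h
      push_cast at hcast
      push_cast
      linear_combination hcast
    calc ((k : ℂ) + 1) * (genBinom α (k+1) : ℂ) * z ^ (k+1) * (r : ℂ) ^ k
          + (k : ℂ) * (genBinom α k : ℂ) * z ^ (k+1) * (r : ℂ) ^ k
        = (((k : ℂ) + 1) * (genBinom α (k+1) : ℂ) + (k : ℂ) * (genBinom α k : ℂ))
          * z ^ (k+1) * (r : ℂ) ^ k := by ring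
      _ = ((α : ℂ) * (genBinom α k : ℂ)) * z ^ (k+1) * (r : ℂ) ^ k := by rw [hrec]; ring_nf
      _ = (α : ℂ) * z * ((genBinom α k : ℂ) * z ^ k * (r : ℂ) ^ k) := by ring
  -- positivity of real part on Ioo (-1) 1
  have hrepos : ∀ r ∈ Ioo (-1 : ℝ) 1, 0 < (1 + (r : ℂ) * z).re := by
    intro r hr
    have hrabs : |r| < 1 := abs_lt.mpr ⟨hr.1, hr.2⟩
    have h1 : (1 + (r : ℂ) * z).re = 1 + r * z.re := by simp
    rw [h1]
    have h2 : |r * z.re| < 1 := by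
      rw [abs_mul]
      calc |r| * |z.re| ≤ |r| * 1 := by
            apply mul_le_mul_of_nonneg_left _ (abs_nonneg r)
            calc |z.re| ≤ ‖z‖ := Complex.abs_re_le_norm z
              _ ≤ 1 := hz
        _ = |r| := mul_one _
        _ < 1 := hrabs
    have := abs_lt.mp h2
    linarith [this.1]
  have hne : ∀ r ∈ Ioo (-1 : ℝ) 1, (1 + (r : ℂ) * z) ≠ 0 := by
    intro r hr h
    have := hrepos r hr
    rw [h] at this
    simp at this
  -- the quotient function is constant
  set K : ℝ → ℂ := fun r => (1 + (r : ℂ) * z) ^ (-(α : ℂ)) with hK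
  set h : ℝ → ℂ := fun r => F r * K r with hh
  have hKderiv : ∀ r ∈ Ioo (-1 : ℝ) 1,
      HasDerivAt K (-(α : ℂ) * (1 + (r : ℂ) * z) ^ (-(α : ℂ) - 1) * z) r := by
    intro r hr
    have hinC : HasDerivAt (fun w : ℂ => 1 + w * z) z (r : ℂ) := by
      have hd1 : HasDerivAt (fun w : ℂ => 1 + w * z) (0 + 1 * z) (r : ℂ) :=
        (hasDerivAt_const (r : ℂ) 1).add ((hasDerivAt_id (r : ℂ)).mul_const z)
      rwa [zero_add, one_mul] at hd1
    have houter : HasDerivAt (fun w : ℂ => (1 + w * z) ^ (-(α : ℂ)))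
        (-(α : ℂ) * (1 + (r : ℂ) * z) ^ (-(α : ℂ) - 1) * z) (r : ℂ) :=
      hinC.cpow_const (Or.inl (hrepos r hr))
    exact houter.comp_ofReal
  have hhderiv : ∀ r ∈ Ioo (-1 : ℝ) 1, HasDerivAt h 0 r := by
    intro r hr
    have hd := (hFderiv r hr).mul (hKderiv r hr)
    have heq : (∑' (k : ℕ), g' k r) * K r
        + F r * (-(α : ℂ) * (1 + (r : ℂ) * z) ^ (-(α : ℂ) - 1) * z) = 0 := by
      have hsplit : (1 + (r : ℂ) * z) ^ (-(α : ℂ))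
          = (1 + (r : ℂ) * z) ^ (-(α : ℂ) - 1) * (1 + (r : ℂ) * z) := by
        conv_lhs => rw [show (-(α : ℂ)) = (-(α : ℂ) - 1) + 1 by ring]
        rw [Complex.cpow_add _ _ (hne r hr), Complex.cpow_one]
      simp only [hK]
      rw [hsplit]
      have hODE' := hODE r hr
      calc (∑' (k : ℕ), g' k r) * ((1 + (r : ℂ) * z) ^ (-(α : ℂ) - 1) * (1 + (r : ℂ) * z))
            + F r * (-(α : ℂ) * (1 + (r : ℂ) * z) ^ (-(α : ℂ) - 1) * z)
          = (1 + (r : ℂ) * z) ^ (-(α : ℂ) - 1)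
            * ((1 + (r : ℂ) * z) * (∑' (k : ℕ), g' k r) - (α : ℂ) * z * F r) := by ring
        _ = 0 := by rw [hODE']; ring
    rw [show (0 : ℂ) = (∑' (k : ℕ), g' k r) * K r
        + F r * (-(α : ℂ) * (1 + (r : ℂ) * z) ^ (-(α : ℂ) - 1) * z) from heq.symm]
    exact hd
  -- h is constant on Ioo (-1) 1
  have hconst : ∀ r ∈ Ioo (-1 : ℝ) 1, h r = h 0 := by
    intro r hr
    apply (convex_Ioo (-1 : ℝ) 1).is_const_of_fderivWithin_eq_zero
      (fun x hx => ((hhderiv x hx).differentiableAt).differentiableWithinAt)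
      _ hr (by constructor <;> norm_num)
    intro x hx
    rw [fderivWithin_of_isOpen isOpen_Ioo hx]
    have := ((hhderiv x hx).hasFDerivAt).fderiv
    rw [this]
    ext y
    simp
  -- value at 0
  have hF0 : F 0 = 1 := by
    have : F 0 = ∑' k : ℕ, (genBinom α k : ℂ) * z ^ k * ((0:ℝ) : ℂ) ^ k := rfl
    rw [this, tsum_eq_single 0]
    · norm_num [genBinom]
    · intro k hk
      norm_num [zero_pow hk]
  have hh0 : h 0 = 1 := by
    have : h 0 = F 0 * K 0 := rfl
    rw [this, hF0, one_mul]
    have : K 0 = ((1 : ℂ) + ((0:ℝ) : ℂ) * z) ^ (-(α : ℂ)) := rfl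
    rw [this]
    norm_num
  -- hence F r = (1 + r z) ^ α on Ioo (-1) 1
  have hFeq : ∀ r ∈ Ioo (-1 : ℝ) 1, F r = (1 + (r : ℂ) * z) ^ (α : ℂ) := by
    intro r hr
    have h1 : F r * K r = 1 := by rw [← hh0]; exact hconst r hr
    have hKne : K r ≠ 0 := by
      simp only [hK]
      intro hzero
      rw [Complex.cpow_eq_zero_iff] at hzero
      exact hne r hr hzero.1
    have h2 : F r = (K r)⁻¹ := by
      rw [inv_eq_one_div, eq_div_iff hKne]
      exact h1
    rw [h2]
    simp only [hK]
    rw [← Complex.cpow_neg, neg_neg]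
  -- continuity of G on Icc 0 1
  set G : ℝ → ℂ := fun r => (1 + (r : ℂ) * z) ^ (α : ℂ) with hG
  have hrepos2 : ∀ r ∈ Icc (0 : ℝ) 1, 0 < (1 + (r : ℂ) * z).re := by
    intro r hr
    have h1 : (1 + (r : ℂ) * z).re = 1 + r * z.re := by simp
    rw [h1]
    rcases le_or_gt 0 z.re with hc | hc
    · have := mul_nonneg hr.1 hc
      linarith
    · have h3 : 1 * z.re ≤ r * z.re := mul_le_mul_of_nonpos_right hr.2 (le_of_lt hc)
      rw [one_mul] at h3
      linarith
  have hGcont : ContinuousOn G (Icc (0 : ℝ) 1) := by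
    intro r hr
    apply ContinuousAt.continuousWithinAt
    have hibase : ContinuousAt (fun r : ℝ => 1 + (r : ℂ) * z) r := by
      apply Continuous.continuousAt
      continuity
    exact ContinuousAt.comp (g := fun w : ℂ => w ^ (α : ℂ))
      (f := fun r : ℝ => 1 + (r : ℂ) * z) (x := r)
      (continuousAt_cpow_const (Or.inl (hrepos2 r hr))) hibase
  -- identify the limits at 1
  have hNB : (nhdsWithin (1 : ℝ) (Ico (0 : ℝ) 1)).NeBot := by
    apply mem_closure_iff_nhdsWithin_neBot.mp
    rw [closure_Ico (show (0:ℝ) ≠ 1 by norm_num)]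
    exact ⟨zero_le_one, le_refl 1⟩
  have hT1 : Tendsto F (nhdsWithin (1 : ℝ) (Ico (0 : ℝ) 1)) (nhds (F 1)) := by
    have := (hFcont 1 (by constructor <;> norm_num)).mono
      (show Ico (0:ℝ) 1 ⊆ Icc (-1:ℝ) 1 by
        intro x hx; exact ⟨by linarith [hx.1], le_of_lt hx.2⟩)
    exact this
  have hT2 : Tendsto F (nhdsWithin (1 : ℝ) (Ico (0 : ℝ) 1)) (nhds (G 1)) := by
    have hGT : Tendsto G (nhdsWithin (1 : ℝ) (Ico (0 : ℝ) 1)) (nhds (G 1)) :=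
      (hGcont 1 (by constructor <;> norm_num)).mono
        (show Ico (0:ℝ) 1 ⊆ Icc (0:ℝ) 1 by exact Ico_subset_Icc_self)
    apply hGT.congr'
    apply eventuallyEq_nhdsWithin_of_eqOn
    intro x hx
    exact (hFeq x ⟨by linarith [hx.1], hx.2⟩).symm
  have hF1 : F 1 = G 1 := tendsto_nhds_unique hT1 hT2
  -- conclude
  have hFone : F 1 = ∑' k : ℕ, (genBinom α k : ℂ) * z ^ k := by
    have : F 1 = ∑' k : ℕ, (genBinom α k : ℂ) * z ^ k * ((1:ℝ) : ℂ) ^ k := rfl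
    rw [this]
    apply tsum_congr
    intro k
    norm_num
  have hGone : G 1 = (1 + z) ^ (α : ℂ) := by
    have : G 1 = (1 + ((1:ℝ) : ℂ) * z) ^ (α : ℂ) := rfl
    rw [this]
    norm_num
  rw [← hFone, hF1, hGone]

end Aux

open Complex Set Filter in
/-- For `0 < α < 1` and `0 < θ ≤ π`, the series `∑_{k=0}^∞ (−1)^k C(α,k) cos(kθ)`
converges absolutely to `2^α · sin^α(θ/2) · cos(α(θ − π)/2)`. -/
theorem alternating_binom_cos_series
    (α θ : ℝ) (h0 : 0 < α) (h1 : α < 1) (hθ0 : 0 < θ) (hθπ : θ ≤ π) :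
    (Summable fun k : ℕ => |(-1 : ℝ) ^ k * genBinom α k * Real.cos (k * θ)|) ∧
    ∑' k : ℕ, (-1 : ℝ) ^ k * genBinom α k * Real.cos (k * θ)
      = (2 : ℝ) ^ α * Real.sin (θ / 2) ^ α * Real.cos (α * (θ - π) / 2) := by
  have hu := summable_abs_genBinom h0 h1
  have hπ := Real.pi_pos
  -- basic trig facts
  have hsin : 0 < Real.sin (θ / 2) := by
    apply Real.sin_pos_of_pos_of_lt_pi (by linarith)
    linarith
  have hsinsq : Real.sin (θ / 2) ^ 2 = 1 / 2 - Real.cos θ / 2 := by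
    have h := Real.sin_sq_eq_half_sub (θ / 2)
    rw [show 2 * (θ / 2) = θ by ring] at h
    linarith [h]
  have hcoslt : Real.cos θ < 1 := by nlinarith [hsinsq, sq_nonneg (Real.sin (θ/2))]
  -- part 1: summability
  have hsum1 : Summable fun k : ℕ => |(-1 : ℝ) ^ k * genBinom α k * Real.cos (k * θ)| := by
    apply Summable.of_nonneg_of_le (fun k => abs_nonneg _) _ hu
    intro k
    rw [abs_mul, abs_mul, _root_.abs_pow, abs_neg, abs_one, one_pow, one_mul]
    calc |genBinom α k| * |Real.cos (k * θ)| ≤ |genBinom α k| * 1 :=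
          mul_le_mul_of_nonneg_left (Real.abs_cos_le_one _) (abs_nonneg _)
      _ = |genBinom α k| := mul_one _
  refine ⟨hsum1, ?_⟩
  -- the complex series
  set z : ℂ := -Complex.exp (θ * Complex.I) with hz
  have habs : ‖z‖ = 1 := by
    rw [hz, norm_neg, Complex.norm_exp]
    simp
  have hzre : z.re = -Real.cos θ := by
    rw [hz]
    simp [Complex.exp_ofReal_mul_I_re]
  have hre : -1 < z.re := by rw [hzre]; linarith
  have hkey := binom_tsum_eq α h0 h1 z (le_of_eq habs) hre
  -- summability of complex series
  have hcs : Summable fun k : ℕ => (genBinom α k : ℂ) * z ^ k := by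
    apply Summable.of_norm_bounded hu
    intro k
    rw [norm_mul, norm_pow, habs, one_pow, mul_one,
      Complex.norm_real, Real.norm_eq_abs]
  -- each term's real part
  have hterm : ∀ k : ℕ, ((genBinom α k : ℂ) * z ^ k).re
      = (-1 : ℝ) ^ k * genBinom α k * Real.cos (k * θ) := by
    intro k
    have hzk : z ^ k = (((-1 : ℝ) ^ k : ℝ) : ℂ) * Complex.exp ((k * θ : ℝ) * Complex.I) := by
      rw [hz, neg_pow, ← Complex.exp_nat_mul]
      push_cast
      ring_nf
    rw [hzk]
    rw [show (genBinom α k : ℂ) * ((((-1 : ℝ) ^ k : ℝ) : ℂ) * Complex.exp ((k * θ : ℝ) * Complex.I))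
      = (((((-1 : ℝ) ^ k) * genBinom α k : ℝ)) : ℂ) * Complex.exp ((k * θ : ℝ) * Complex.I) by
        push_cast; ring]
    rw [Complex.re_ofReal_mul, Complex.exp_ofReal_mul_I_re]
  -- sum of real parts
  have hre_tsum : ∑' k : ℕ, (-1 : ℝ) ^ k * genBinom α k * Real.cos (k * θ)
      = ((1 + z) ^ (α : ℂ)).re := by
    rw [← hkey, Complex.re_tsum hcs]
    exact tsum_congr fun k => (hterm k).symm
  rw [hre_tsum]
  -- compute (1 + z) ^ α
  set R : ℝ := 2 * Real.sin (θ / 2) with hR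
  set ψ : ℝ := (θ - π) / 2 with hψ
  have hRpos : 0 < R := by rw [hR]; positivity
  have hcψ : Real.cos ψ = Real.sin (θ / 2) := by
    rw [hψ, show (θ - π) / 2 = θ / 2 - π / 2 by ring, Real.cos_sub_pi_div_two]
  have hsψ : Real.sin ψ = -Real.cos (θ / 2) := by
    rw [hψ, show (θ - π) / 2 = θ / 2 - π / 2 by ring, Real.sin_sub_pi_div_two]
  have hsin2 : Real.sin θ = 2 * Real.sin (θ / 2) * Real.cos (θ / 2) := by
    have := Real.sin_two_mul (θ / 2)
    rw [show 2 * (θ / 2) = θ by ring] at this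
    linarith
  -- 1 + z = R * exp(ψ I)
  have hfactor : (1 : ℂ) + z = (R : ℂ) * Complex.exp ((ψ : ℝ) * Complex.I) := by
    rw [hz]
    apply Complex.ext
    · simp only [Complex.add_re, Complex.one_re, Complex.neg_re,
        Complex.exp_ofReal_mul_I_re, Complex.re_ofReal_mul]
      rw [hcψ]
      nlinarith [hsinsq]
    · simp only [Complex.add_im, Complex.one_im, Complex.neg_im,
        Complex.exp_ofReal_mul_I_im, Complex.im_ofReal_mul]
      rw [hsψ]
      rw [hsin2]
      ring
  -- 1 + z = exp(w)
  set w : ℂ := (Real.log R : ℂ) + (ψ : ℝ) * Complex.I with hw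
  have hexpw : Complex.exp w = (1 : ℂ) + z := by
    rw [hfactor, hw, Complex.exp_add]
    congr 1
    rw [← Complex.ofReal_exp, Real.exp_log hRpos]
  have hwim1 : -π < w.im := by
    rw [hw]
    simp only [Complex.add_im, Complex.ofReal_im, Complex.mul_im, Complex.ofReal_re,
      Complex.I_im, Complex.I_re, Complex.ofReal_im, mul_zero, mul_one, zero_add]
    rw [hψ]
    linarith
  have hwim2 : w.im ≤ π := by
    rw [hw]
    simp only [Complex.add_im, Complex.ofReal_im, Complex.mul_im, Complex.ofReal_re,
      Complex.I_im, Complex.I_re, Complex.ofReal_im, mul_zero, mul_one, zero_add]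
    rw [hψ]
    linarith
  have hne : (1 : ℂ) + z ≠ 0 := by
    rw [← hexpw]
    exact Complex.exp_ne_zero w
  have hpow : ((1 : ℂ) + z) ^ (α : ℂ)
      = ((R ^ α : ℝ) : ℂ) * Complex.exp (((α * ψ : ℝ) : ℂ) * Complex.I) := by
    rw [Complex.cpow_def_of_ne_zero hne, ← hexpw, Complex.log_exp hwim1 hwim2, hw]
    rw [show ((Real.log R : ℂ) + (ψ : ℝ) * Complex.I) * (α : ℂ)
        = ((α * Real.log R : ℝ) : ℂ) + ((α * ψ : ℝ) : ℂ) * Complex.I by push_cast; ring]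
    rw [Complex.exp_add]
    congr 1
    rw [← Complex.ofReal_exp]
    congr 1
    rw [Real.rpow_def_of_pos hRpos]
    ring_nf
  rw [hpow, Complex.re_ofReal_mul, Complex.exp_ofReal_mul_I_re]
  rw [hR, Real.mul_rpow (by norm_num) (le_of_lt hsin)]
  rw [hψ]
  rw [show α * ((θ - π) / 2) = α * (θ - π) / 2 by ring]
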